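/- Let N_1, N_2, N_3 ∈ ℂ[u, v, w] be homogeneous polynomials of the same degree k, not all zero, such that every common divisor of N_1, N_2, N_3 is a unit. Suppose a, b, c ∈ ℂ[u, v, w] satisfy N_2 a + N_3 b = 0, N_1 a = N_3 c, and N_1 b + N_2 c = 0. Then there exists h ∈ ℂ[u, v, w] with a = h N_3, b = −h N_2, and c = h N_1. -/

import Mathlib

/-- Key divisibility lemma: in a UFD, if `r ∣ p * a` and `r ∣ q * a` and every common
divisor of `p`, `q`, `r` is a unit, then `r ∣ a`. -/
lemma koszul_key_dvd {R : Type*} [CommRing R] [IsDomain R] [UniqueFactorizationMonoid R]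
    {p q r a : R}
    (h : ∀ d : R, d ∣ p → d ∣ q → d ∣ r → IsUnit d)
    (h1 : r ∣ p * a) (h2 : r ∣ q * a) : r ∣ a := by
  classical
  letI := UniqueFactorizationMonoid.normalizationMonoid (α := R)
  letI := UniqueFactorizationMonoid.toNormalizedGCDMonoid R
  have hg : r ∣ gcd p q * normalize a := by
    have := dvd_gcd h1 h2
    exact this.trans ((gcd_mul_right' a p q).dvd.trans (mul_dvd_mul_left _ (normalize_associated a).symm.dvd))
  have hrel : IsRelPrime r (gcd p q) := fun d hd1 hd2 =>
    h d (hd2.trans (gcd_dvd_left p q)) (hd2.trans (gcd_dvd_right p q)) hd1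
  exact (hrel.dvd_of_dvd_mul_left hg).trans (normalize_associated a).dvd

/-- Exactness of the Koszul complex at the middle spot: if `N₁, N₂, N₃`
are homogeneous of the same degree `k`, not all zero, with only unit common divisors, and
`(a,b,c)` is in the kernel of the second Koszul differential, i.e. `N₂a + N₃b = 0`,
`N₁a = N₃c`, `N₁b + N₂c = 0`, then `(a,b,c) = (hN₃, −hN₂, hN₁)` for some polynomial `h`. -/
theorem koszul_exact_middle
    (N : Fin 3 → MvPolynomial (Fin 3) ℂ) (k : ℕ)
    (hhom : ∀ i, (N i).IsHomogeneous k) (hN : N ≠ 0)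
    (hgcd : ∀ d : MvPolynomial (Fin 3) ℂ, d ∣ N 0 → d ∣ N 1 → d ∣ N 2 → IsUnit d)
    (a b c : MvPolynomial (Fin 3) ℂ)
    (h1 : N 1 * a + N 2 * b = 0)
    (h2 : N 0 * a = N 2 * c)
    (h3 : N 0 * b + N 1 * c = 0) :
    ∃ h : MvPolynomial (Fin 3) ℂ, a = h * N 2 ∧ b = -(h * N 1) ∧ c = h * N 0 := by
  by_cases hN2 : N 2 ≠ 0
  · -- N 2 divides a
    have hda : N 2 ∣ a := by
      refine koszul_key_dvd (p := N 0) (q := N 1) (fun d h0 h1' h2' => hgcd d h0 h1' h2') ?_ ?_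
      · exact ⟨c, h2⟩
      · exact ⟨-b, by linear_combination h1⟩
    obtain ⟨h, rfl⟩ := hda
    refine ⟨h, mul_comm _ _, ?_, ?_⟩
    · have : N 2 * b = N 2 * (-(h * N 1)) := by linear_combination h1
      exact mul_left_cancel₀ hN2 this
    · have : N 2 * c = N 2 * (h * N 0) := by linear_combination -h2
      exact mul_left_cancel₀ hN2 this
  · push_neg at hN2
    by_cases hN0 : N 0 ≠ 0
    · have ha : a = 0 := by
        have : N 0 * a = 0 := by rw [h2, hN2, zero_mul]
        exact (mul_eq_zero.mp this).resolve_left hN0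
      have hdc : N 0 ∣ c := by
        refine koszul_key_dvd (p := N 1) (q := N 2)
          (fun d hd1 hd2 hd0 => hgcd d hd0 hd1 hd2) ?_ ?_
        · exact ⟨-b, by linear_combination h3⟩
        · exact ⟨0, by rw [hN2, zero_mul, mul_zero]⟩
      obtain ⟨h, rfl⟩ := hdc
      refine ⟨h, by rw [hN2, mul_zero, ha], ?_, mul_comm _ _⟩
      have : N 0 * b = N 0 * (-(h * N 1)) := by linear_combination h3
      exact mul_left_cancel₀ hN0 this
    · push_neg at hN0
      by_cases hN1 : N 1 ≠ 0
      · have ha : a = 0 := by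
          have : N 1 * a = 0 := by linear_combination h1 - b * hN2
          exact (mul_eq_zero.mp this).resolve_left hN1
        have hc : c = 0 := by
          have : N 1 * c = 0 := by linear_combination h3 - b * hN0
          exact (mul_eq_zero.mp this).resolve_left hN1
        have hu : IsUnit (N 1) := hgcd (N 1) ⟨0, by rw [hN0, mul_zero]⟩ dvd_rfl
          ⟨0, by rw [hN2, mul_zero]⟩
        obtain ⟨u, hu⟩ := hu
        refine ⟨-b * ↑u⁻¹, by rw [hN2, mul_zero, ha], ?_, by rw [hN0, mul_zero, hc]⟩
        have : (↑u⁻¹ : MvPolynomial (Fin 3) ℂ) * N 1 = 1 := by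
          rw [← hu]; exact u.inv_mul
        calc b = -(-b * (↑u⁻¹ * N 1)) := by rw [this, mul_one, neg_neg]
          _ = -(-b * ↑u⁻¹ * N 1) := by ring
      · push_neg at hN1
        exfalso
        apply hN
        funext i
        fin_cases i <;> simpa [hN0, hN1, hN2]
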